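/- Let F = (F_1,…,F_T) and F* = (F*_1,…,F*_T) be T-tuples of subsets of [n] with coverage values v_i = 1 + |{t : i ∈ F_t}| and v*_i = 1 + |{t : i ∈ F*_t}|. Define φ(G) = ∑_i log(v_i(G)). Then (1/T) ∑_{t=1}^T (φ(F*_t, F_{-t}) - φ(F)) ≥ (1/T) ∑_{i=1}^n (v*_i - 1)/(v_i + 1) - n/T. -/

import Mathlib

/-- Coverage value of agent `i` under solution `F`. -/
def cov {n T : ℕ} (F : Fin T → Finset (Fin n)) (i : Fin n) : ℕ :=
  1 + (Finset.univ.filter fun t => i ∈ F t).card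

/-- Log social welfare of a solution. -/
noncomputable def phi {n T : ℕ} (F : Fin T → Finset (Fin n)) : ℝ :=
  ∑ i, Real.log (cov F i)

open Finset

lemma log_ge_aux (x : ℝ) (hx : 0 < x) : 1 - 1/x ≤ Real.log x := by
  have h := Real.log_le_sub_one_of_pos (show (0:ℝ) < 1/x by positivity)
  rw [Real.log_div one_ne_zero hx.ne', Real.log_one] at h
  linarith

lemma cov_real {n T : ℕ} (F : Fin T → Finset (Fin n)) (i : Fin n) :
    (cov F i : ℝ) = 1 + ∑ t, (if i ∈ F t then (1:ℝ) else 0) := by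
  unfold cov
  rw [Finset.card_filter]
  push_cast
  rfl

lemma key_ineq (v a b : ℝ) (hv : 1 ≤ v) (ha : a = 0 ∨ (a = 1 ∧ 2 ≤ v))
    (hb : b = 0 ∨ b = 1) :
    b/(v+1) - a/(v-1) ≤ Real.log (v - a + b) - Real.log v := by
  have hv0 : (0:ℝ) < v := by linarith
  rcases ha with ha | ⟨ha, hv2⟩
  · rcases hb with hb | hb
    · simp [ha, hb]
    · subst ha hb
      have h := log_ge_aux ((v+1)/v) (by positivity)
      rw [Real.log_div (by linarith) hv0.ne'] at h
      have : 1 - 1/((v+1)/v) = 1/(v+1) := by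
        field_simp
        ring
      rw [this] at h
      have e : v - 0 + 1 = v + 1 := by ring
      rw [e, zero_div, sub_zero]
      linarith
  · have hv1 : (0:ℝ) < v - 1 := by linarith
    rcases hb with hb | hb
    · subst ha hb
      have h := log_ge_aux ((v-1)/v) (by positivity)
      rw [Real.log_div hv1.ne' hv0.ne'] at h
      have : 1 - 1/((v-1)/v) = -(1/(v-1)) := by
        field_simp
        ring
      rw [this] at h
      have e : v - 1 + 0 = v - 1 := by ring
      rw [e, zero_div, zero_sub]
      linarith
    · subst ha hb
      have e : v - 1 + 1 = v := by ring
      rw [e, sub_self]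
      have h1 : 1/(v+1) ≤ 1/(v-1) := by
        apply one_div_le_one_div_of_le hv1
        linarith
      linarith

lemma cov_update_real {n T : ℕ} (F : Fin T → Finset (Fin n)) (t : Fin T)
    (S : Finset (Fin n)) (i : Fin n) :
    (cov (Function.update F t S) i : ℝ) =
      (cov F i : ℝ) - (if i ∈ F t then 1 else 0) + (if i ∈ S then 1 else 0) := by
  rw [cov_real, cov_real]
  have h : ∀ s : Fin T, (if i ∈ Function.update F t S s then (1:ℝ) else 0) =
      Function.update (fun s => if i ∈ F s then (1:ℝ) else 0) t
        (if i ∈ S then 1 else 0) s := by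
    intro s
    by_cases hs : s = t
    · subst hs; simp
    · simp [Function.update_of_ne hs]
  rw [Finset.sum_congr rfl (fun s _ => h s)]
  rw [Finset.sum_update_of_mem (Finset.mem_univ t)]
  rw [← Finset.sum_erase_add Finset.univ _ (Finset.mem_univ t)]
  simp [Finset.sdiff_singleton_eq_erase]
  ring

theorem expected_phi_diff {n T : ℕ} (F Fstar : Fin T → Finset (Fin n)) :
    (1 / (T : ℝ)) * ∑ t, (phi (Function.update F t (Fstar t)) - phi F) ≥
      (1 / (T : ℝ)) * (∑ i, ((cov Fstar i : ℝ) - 1) / ((cov F i : ℝ) + 1)) -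
        (n : ℝ) / T := by
  have hmain : (∑ i, ((cov Fstar i : ℝ) - 1) / ((cov F i : ℝ) + 1)) - (n : ℝ) ≤
      ∑ t, (phi (Function.update F t (Fstar t)) - phi F) := by
    have hswap : ∑ t, (phi (Function.update F t (Fstar t)) - phi F) =
        ∑ i, ∑ t, (Real.log (cov (Function.update F t (Fstar t)) i) -
          Real.log (cov F i)) := by
      rw [Finset.sum_comm]
      simp [phi, Finset.sum_sub_distrib]
    rw [hswap]
    have hn : (n : ℝ) = ∑ _i : Fin n, (1:ℝ) := by simp
    rw [hn, ← Finset.sum_sub_distrib]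
    apply Finset.sum_le_sum
    intro i _
    set v : ℝ := (cov F i : ℝ) with hvdef
    have hv1 : (1:ℝ) ≤ v := by
      simp only [hvdef, cov]; push_cast; linarith [Nat.cast_nonneg (α := ℝ)
        ((Finset.univ.filter fun t => i ∈ F t).card)]
    -- per t bound
    have hstep : ∀ t : Fin T,
        (if i ∈ Fstar t then (1:ℝ) else 0)/(v+1) -
          (if i ∈ F t then (1:ℝ) else 0)/(v-1) ≤
        Real.log (cov (Function.update F t (Fstar t)) i) - Real.log (cov F i) := by
      intro t
      have hc := cov_update_real F t (Fstar t) i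
      rw [hc]
      apply key_ineq v _ _ hv1
      · by_cases h : i ∈ F t
        · right
          refine ⟨by simp [h], ?_⟩
          have hcard : 1 ≤ (Finset.univ.filter fun s => i ∈ F s).card :=
            Finset.card_pos.mpr ⟨t, by simp [h]⟩
          have h2 : 2 ≤ cov F i := by unfold cov; omega
          rw [hvdef]; exact_mod_cast h2
        · left; simp [h]
      · by_cases h : i ∈ Fstar t <;> simp [h]
    calc ((cov Fstar i : ℝ) - 1) / ((cov F i : ℝ) + 1) - 1
        ≤ ∑ t, ((if i ∈ Fstar t then (1:ℝ) else 0)/(v+1) -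
            (if i ∈ F t then (1:ℝ) else 0)/(v-1)) := by
          rw [Finset.sum_sub_distrib, ← Finset.sum_div, ← Finset.sum_div]
          have h1 : ∑ t, (if i ∈ Fstar t then (1:ℝ) else 0) = (cov Fstar i : ℝ) - 1 := by
            rw [cov_real]; ring
          have h2 : ∑ t, (if i ∈ F t then (1:ℝ) else 0) = v - 1 := by
            rw [hvdef, cov_real]; ring
          rw [h1, h2, ← hvdef]
          have h3 : (v-1)/(v-1) ≤ 1 :=
            div_self_le_one (v - 1)
          linarith
      _ ≤ ∑ t, (Real.log (cov (Function.update F t (Fstar t)) i) -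
            Real.log (cov F i)) := Finset.sum_le_sum fun t _ => hstep t
  have hT : (0:ℝ) ≤ 1 / (T : ℝ) := by positivity
  have := mul_le_mul_of_nonneg_left hmain hT
  have heq : (1 / (T : ℝ)) * ((∑ i, ((cov Fstar i : ℝ) - 1) / ((cov F i : ℝ) + 1)) - (n : ℝ))
      = (1 / (T : ℝ)) * (∑ i, ((cov Fstar i : ℝ) - 1) / ((cov F i : ℝ) + 1)) - (n : ℝ) / T := by
    ring
  rw [heq] at this
  exact this
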